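/- Let 0 ≤ i < m and let w be a word on the letters {s_0, …, s_{i+1}} and their inverses, of length n, containing exactly p occurrences of the letters s_{i+1}^{±1}, and suppose w represents an element of the cyclic subgroup ⟨s_i⟩ of G_m. Then w = s_i^ℓ in G_m for some integer ℓ with |ℓ| ≤ (n−p)·2^p; in particular |ℓ| ≤ 2^n. -/

import Mathlib

/-- Iterated exponential: `E 0 n = n`, `E (m+1) n = 2 ^ E m n`. -/
def E : ℕ → ℕ → ℕ
  | 0, n => n
  | m + 1, n => 2 ^ E m n

/-- `Preceq f g` iff there is `C > 0` with `f n ≤ C * g (C*n + C) + C*n + C` for all `n`. -/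
def Preceq (f g : ℕ → ℕ) : Prop :=
  ∃ C : ℕ, 0 < C ∧ ∀ n : ℕ, f n ≤ C * g (C * n + C) + C * n + C

/-- Defining relations of the `m`-th iterated Baumslag–Solitar group:
`s_{i+1} s_i s_{i+1}⁻¹ = s_i²` for `i = 0, …, m-1`. -/
def bsRels (m : ℕ) : Set (FreeGroup (Fin (m + 1))) :=
  Set.range (fun i : Fin m =>
    FreeGroup.of i.succ * FreeGroup.of i.castSucc * (FreeGroup.of i.succ)⁻¹ *
      (FreeGroup.of i.castSucc ^ 2)⁻¹)

/-- The `m`-th iterated Baumslag–Solitar group. -/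
abbrev IterBS (m : ℕ) := PresentedGroup (bsRels m)

/-- The generator `s_i` of `IterBS m`. -/
def sg {m : ℕ} (i : Fin (m + 1)) : IterBS m := PresentedGroup.of i

/-- The element of `IterBS m` represented by a word on the generators and their inverses. -/
def evalWord {m : ℕ} (w : List (Fin (m + 1) × Bool)) : IterBS m :=
  (w.map (fun p => if p.2 then sg p.1 else (sg p.1)⁻¹)).prod

/-- Word length of `g ∈ IterBS m` with respect to the generators `s_0, …, s_m`. -/
noncomputable def wl {m : ℕ} (g : IterBS m) : ℕ :=
  sInf { n | ∃ w : List (Fin (m + 1) × Bool), w.length = n ∧ evalWord w = g }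

/-- The minimal word length of a conjugator taking `u` to `v`. -/
noncomputable def cLen {m : ℕ} (u v : IterBS m) : ℕ :=
  sInf { n | ∃ γ : IterBS m, γ * u * γ⁻¹ = v ∧ wl γ = n }

/-- The conjugator length function of `IterBS m`. -/
noncomputable def CLGm (m : ℕ) (n : ℕ) : ℕ :=
  sSup { c | ∃ u v : List (Fin (m + 1) × Bool),
    u.length + v.length ≤ n ∧
    (∃ γ : IterBS m, γ * evalWord u * γ⁻¹ = evalWord v) ∧
    c = cLen (evalWord u) (evalWord v) }



namespace IterBSAux

noncomputable def T : Equiv.Perm ℝ := Equiv.addRight (1 : ℝ)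
noncomputable def D : Equiv.Perm ℝ := Equiv.mulLeft₀ (2 : ℝ) two_ne_zero

noncomputable def phiFun (g : ℝ → ℝ) (x : ℝ) : ℝ :=
  if 0 < x then Real.exp (g (Real.log x))
  else if x < 0 then -Real.exp (g (Real.log (-x))) else 0

lemma phiFun_comp (g h : ℝ → ℝ) (x : ℝ) :
    phiFun g (phiFun h x) = phiFun (fun y => g (h y)) x := by
  rcases lt_trichotomy 0 x with hx | hx | hx
  · have h1 : phiFun h x = Real.exp (h (Real.log x)) := if_pos hx
    have h2 : 0 < phiFun h x := h1 ▸ Real.exp_pos _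
    rw [phiFun, if_pos h2, h1, Real.log_exp, phiFun, if_pos hx]
  · simp [phiFun, ← hx]
  · have h1 : phiFun h x = -Real.exp (h (Real.log (-x))) := by
      rw [phiFun, if_neg (by linarith), if_pos hx]
    have h2 : phiFun h x < 0 := by rw [h1]; simpa using Real.exp_pos _
    rw [phiFun, if_neg (by linarith), if_pos h2, h1, neg_neg, Real.log_exp,
      phiFun, if_neg (by linarith), if_pos hx]

lemma phiFun_id (x : ℝ) : phiFun (fun y => y) x = x := by
  rcases lt_trichotomy 0 x with hx | hx | hx
  · rw [phiFun, if_pos hx, Real.exp_log hx]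
  · simp [phiFun, ← hx]
  · rw [phiFun, if_neg (by linarith), if_pos hx, Real.exp_log (by linarith), neg_neg]

noncomputable def Phi (g : Equiv.Perm ℝ) : Equiv.Perm ℝ where
  toFun := phiFun g
  invFun := phiFun g.symm
  left_inv := fun x => by
    rw [phiFun_comp]; simp only [Equiv.symm_apply_apply]; exact phiFun_id x
  right_inv := fun x => by
    rw [phiFun_comp]; simp only [Equiv.apply_symm_apply]; exact phiFun_id x

lemma Phi_apply (g : Equiv.Perm ℝ) (x : ℝ) : Phi g x = phiFun g x := rfl

lemma Phi_mul (g h : Equiv.Perm ℝ) : Phi (g * h) = Phi g * Phi h := by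
  ext x
  show phiFun (⇑(g * h)) x = phiFun g (phiFun h x)
  rw [phiFun_comp]
  rfl

lemma Phi_inv (g : Equiv.Perm ℝ) : Phi g⁻¹ = (Phi g)⁻¹ := rfl

lemma Phi_rel {g h : Equiv.Perm ℝ} (H : g * h * g⁻¹ = h * h) :
    Phi g * Phi h * (Phi g)⁻¹ = Phi h * Phi h := by
  rw [← Phi_inv, ← Phi_mul, ← Phi_mul, H, Phi_mul]

noncomputable def fT : ℕ → Equiv.Perm ℝ
  | 0 => T
  | 1 => D
  | (n + 2) => Phi (fT (n + 1))

lemma relDc (c : ℝ) :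
    D * Equiv.addRight c * D⁻¹ = Equiv.addRight c * Equiv.addRight c := by
  ext x
  show (2:ℝ) * (2⁻¹ * x + c) = (x + c) + c
  ring

lemma D_eq_Phi : D = Phi (Equiv.addRight (Real.log 2)) := by
  ext x
  show (2 : ℝ) * x = phiFun (⇑(Equiv.addRight (Real.log 2))) x
  have hco : ⇑(Equiv.addRight (Real.log 2)) = fun y => y + Real.log 2 := rfl
  rw [hco]
  rcases lt_trichotomy 0 x with hx | hx | hx
  · rw [phiFun, if_pos hx, Real.exp_add, Real.exp_log hx, Real.exp_log two_pos]; ring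
  · simp [phiFun, ← hx]
  · rw [phiFun, if_neg (by linarith), if_pos hx, Real.exp_add,
      Real.exp_log (by linarith : (0:ℝ) < -x), Real.exp_log two_pos]
    ring

lemma relTower : ∀ j : ℕ, fT (j + 1) * fT j * (fT (j + 1))⁻¹ = fT j * fT j
  | 0 => by simpa [fT, T] using relDc 1
  | 1 => by
    show Phi D * D * (Phi D)⁻¹ = D * D
    have h1 := Phi_rel (relDc (Real.log 2))
    rw [← D_eq_Phi] at h1
    exact h1
  | (j + 2) => by
    show Phi (fT (j + 2)) * Phi (fT (j + 1)) * (Phi (fT (j + 2)))⁻¹ =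
      Phi (fT (j + 1)) * Phi (fT (j + 1))
    exact Phi_rel (relTower (j + 1))

end IterBSAux

namespace IterBSAux

/-- T zpow evaluation -/
lemma T_zpow_apply : ∀ (k : ℤ) (x : ℝ), ((T ^ k) : Equiv.Perm ℝ) x = x + k := by
  intro k
  induction k using Int.induction_on with
  | zero => simp
  | succ n ih =>
    intro x
    rw [zpow_add_one, Equiv.Perm.mul_apply, show T x = x + 1 from rfl, ih]
    push_cast; ring
  | pred n ih =>
    intro x
    rw [zpow_sub_one, Equiv.Perm.mul_apply, show (T⁻¹ : Equiv.Perm ℝ) x = x - 1 from rfl, ih]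
    push_cast; ring

noncomputable def gmap (m i : ℕ) (j : Fin (m + 1)) : Equiv.Perm ℝ :=
  if (j : ℕ) < i then 1 else fT ((j : ℕ) - i)

lemma gmap_rel (m i : ℕ) : ∀ r ∈ bsRels m, FreeGroup.lift (gmap m i) r = 1 := by
  rintro r ⟨k, rfl⟩
  simp only [map_mul, map_inv, map_pow, FreeGroup.lift_apply_of]
  rw [mul_inv_eq_one]
  have hs : ((k.succ : Fin (m + 1)) : ℕ) = (k : ℕ) + 1 := rfl
  have hc : ((k.castSucc : Fin (m + 1)) : ℕ) = (k : ℕ) := rfl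
  rcases lt_trichotomy ((k : ℕ) + 1) i with h | h | h
  · rw [gmap, gmap, hs, hc, if_pos h, if_pos (by omega)]
    simp
  · rw [gmap, gmap, hs, hc, if_neg (by omega), if_pos (by omega)]
    simp
  · rw [gmap, gmap, hs, hc, if_neg (by omega), if_neg (by omega),
      show (k : ℕ) + 1 - i = ((k : ℕ) - i) + 1 by omega, pow_two]
    exact relTower ((k : ℕ) - i)

noncomputable def rep (m i : ℕ) : IterBS m →* Equiv.Perm ℝ :=
  PresentedGroup.toGroup (gmap_rel m i)

noncomputable def lmap (m i : ℕ) (q : Fin (m + 1) × Bool) : Equiv.Perm ℝ :=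
  if q.2 then gmap m i q.1 else (gmap m i q.1)⁻¹

lemma rep_evalWord (m i : ℕ) (w : List (Fin (m + 1) × Bool)) :
    rep m i (evalWord w) = (w.map (lmap m i)).prod := by
  unfold evalWord
  rw [map_list_prod, List.map_map]
  refine congrArg List.prod (List.map_congr_left ?_)
  intro q _
  by_cases hq : q.2 <;> simp [hq, lmap, rep, sg, PresentedGroup.toGroup.of]

lemma prod_bound (m i : ℕ) : ∀ l : List (Fin (m + 1) × Bool), (∀ q ∈ l, (q.1 : ℕ) ≤ i + 1) →
    |((l.map (lmap m i)).prod) 0| ≤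
      ((l.filter (fun q => decide ((q.1 : ℕ) = i))).length : ℝ) *
        2 ^ (l.filter (fun q => decide ((q.1 : ℕ) = i + 1))).length := by
  intro l
  induction l with
  | nil => simp
  | cons q t ih =>
    intro hq
    have ht := ih (fun r hr => hq r (List.mem_cons_of_mem _ hr))
    set A := ((t.filter (fun q => decide ((q.1 : ℕ) = i))).length : ℝ) with hA
    set P := (t.filter (fun q => decide ((q.1 : ℕ) = i + 1))).length with hP
    have hA0 : (0:ℝ) ≤ A := by positivity
    have hpow : (1:ℝ) ≤ 2 ^ P := one_le_pow₀ one_le_two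
    have happ : ((List.map (lmap m i) (q :: t)).prod) 0
        = (lmap m i q) (((t.map (lmap m i)).prod) 0) := by
      rw [List.map_cons, List.prod_cons, Equiv.Perm.mul_apply]
    set x := ((t.map (lmap m i)).prod) 0 with hx
    have hqt : (q.1 : ℕ) ≤ i + 1 := hq q List.mem_cons_self
    rcases lt_trichotomy ((q.1 : ℕ)) i with h | h | h
    · -- low letter: identity
      have hg : gmap m i q.1 = 1 := by rw [gmap, if_pos h]
      have hl : lmap m i q = 1 := by by_cases hb : q.2 <;> simp [lmap, hb, hg]
      rw [happ, hl]
      simp only [List.filter_cons, decide_eq_true_eq]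
      rw [if_neg (by omega), if_neg (by omega)]
      simpa using ht
    · -- letter s_i^{±1}
      have hg : gmap m i q.1 = T := by rw [gmap, if_neg (by omega), h, Nat.sub_self]; rfl
      have habs : |(lmap m i q) x| ≤ |x| + 1 := by
        by_cases hb : q.2
        · rw [lmap, if_pos hb, hg, show T x = x + 1 from rfl]
          exact (abs_add_le _ _).trans (by simp)
        · rw [lmap, if_neg hb, hg, show (T⁻¹ : Equiv.Perm ℝ) x = x - 1 from rfl]
          exact (abs_sub _ _).trans (by simp)
      rw [happ]
      simp only [List.filter_cons, decide_eq_true_eq]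
      rw [if_pos h, if_neg (by omega), List.length_cons]
      refine habs.trans ?_
      push_cast
      linarith [ht, hpow]
    · -- letter s_{i+1}^{±1}
      have h' : (q.1 : ℕ) = i + 1 := by omega
      have hg : gmap m i q.1 = D := by
        rw [gmap, if_neg (by omega), h', show i + 1 - i = 1 by omega]; rfl
      have habs : |(lmap m i q) x| ≤ 2 * |x| := by
        by_cases hb : q.2
        · rw [lmap, if_pos hb, hg, show D x = 2 * x from rfl, abs_mul]
          simp [abs_of_nonneg]
        · rw [lmap, if_neg hb, hg, show (D⁻¹ : Equiv.Perm ℝ) x = 2⁻¹ * x from rfl, abs_mul]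
          rw [abs_of_nonneg (by norm_num : (0:ℝ) ≤ 2⁻¹)]
          nlinarith [abs_nonneg x]
      rw [happ]
      simp only [List.filter_cons, decide_eq_true_eq]
      rw [if_neg (by omega), if_pos h', List.length_cons, pow_succ]
      refine habs.trans ?_
      linarith [ht]

end IterBSAux

/-- A word of length `n` on `{s₀, …, s_{i+1}}` with `p` occurrences of `s_{i+1}^{±1}`
representing a power of `s_i` equals `s_i^ℓ` with `|ℓ| ≤ (n-p)·2^p ≤ 2^n`. -/
theorem power_of_generator_length (m i : ℕ) (hi : i < m)
    (w : List (Fin (m + 1) × Bool)) (hw : ∀ p ∈ w, (p.1 : ℕ) ≤ i + 1)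
    (n p : ℕ) (hn : w.length = n)
    (hp : (w.filter (fun q => decide ((q.1 : ℕ) = i + 1))).length = p)
    (hmem : evalWord w ∈ Subgroup.zpowers (sg (⟨i, by omega⟩ : Fin (m + 1)))) :
    ∃ ℓ : ℤ, evalWord w = sg (⟨i, by omega⟩ : Fin (m + 1)) ^ ℓ ∧
      |ℓ| ≤ ((n - p) * 2 ^ p : ℕ) ∧ |ℓ| ≤ (2 ^ n : ℕ) := by
  obtain ⟨ℓ, hℓ⟩ := Subgroup.mem_zpowers_iff.mp hmem
  have hpn : p ≤ n := by rw [← hn, ← hp]; exact List.length_filter_le _ w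
  have key : |(ℓ : ℝ)| ≤ (((n - p) * 2 ^ p : ℕ) : ℝ) := by
    have h1 : IterBSAux.rep m i (evalWord w) =
        IterBSAux.rep m i (sg (⟨i, by omega⟩ : Fin (m + 1))) ^ ℓ := by
      rw [← hℓ, map_zpow]
    have h2 : IterBSAux.rep m i (sg (⟨i, by omega⟩ : Fin (m + 1))) = IterBSAux.T := by
      show PresentedGroup.toGroup _ (PresentedGroup.of _) = IterBSAux.T
      rw [PresentedGroup.toGroup.of]
      show IterBSAux.gmap m i ⟨i, by omega⟩ = IterBSAux.T
      rw [IterBSAux.gmap]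
      simp [IterBSAux.fT]
    have h3 := IterBSAux.prod_bound m i w hw
    rw [← IterBSAux.rep_evalWord, h1, h2] at h3
    rw [IterBSAux.T_zpow_apply ℓ 0, zero_add] at h3
    refine h3.trans ?_
    rw [hp]
    have hA : (w.filter (fun q => decide ((q.1 : ℕ) = i))).length ≤ n - p := by
      have hsub : (w.filter (fun q => decide ((q.1 : ℕ) = i))).length ≤
          (w.filter (fun q => !(decide ((q.1 : ℕ) = i + 1)))).length := by
        apply List.Sublist.length_le
        apply List.monotone_filter_right
        intro a
        simp only [decide_eq_true_eq, Bool.not_eq_true', decide_eq_false_iff_not]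
        omega
      have htot := List.length_eq_length_filter_add (l := w)
        (fun q => decide ((q.1 : ℕ) = i + 1))
      omega
    have hA' : ((w.filter (fun q => decide ((q.1 : ℕ) = i))).length : ℝ) ≤ ((n - p : ℕ) : ℝ) := by
      exact_mod_cast hA
    push_cast
    have hpow : (0 : ℝ) < 2 ^ p := by positivity
    nlinarith [hA', hpow]
  refine ⟨ℓ, hℓ.symm, ?_, ?_⟩
  · exact_mod_cast key
  · have h4 : (n - p) * 2 ^ p ≤ 2 ^ n := by
      calc (n - p) * 2 ^ p ≤ 2 ^ (n - p) * 2 ^ p :=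
            Nat.mul_le_mul_right _ (Nat.lt_two_pow_self).le
        _ = 2 ^ (n - p + p) := (pow_add 2 _ _).symm
        _ = 2 ^ n := by rw [Nat.sub_add_cancel hpn]
    have h5 : |(ℓ : ℝ)| ≤ ((2 ^ n : ℕ) : ℝ) := key.trans (by exact_mod_cast h4)
    exact_mod_cast h5
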